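/- Let F ∈ ℂ[X,Y]² be a Keller mapping. If (a,b) ∈ ℂ² ∖ F(ℂ²), then (a,b) is a limiting value of F at infinity: there exists a sequence (zₙ) of points of ℂ² with ‖zₙ‖ → ∞ and F(zₙ) → (a,b). In other words, every Picard exceptional value of a Keller mapping is a limiting value of the mapping along points tending to infinity. -/

import Mathlib

open MvPolynomial Filter

abbrev PolyPair := MvPolynomial (Fin 2) ℂ × MvPolynomial (Fin 2) ℂ

noncomputable def eval2 (p : MvPolynomial (Fin 2) ℂ) (x y : ℂ) : ℂ :=
  MvPolynomial.eval ![x, y] p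

noncomputable def jacDet (P Q : MvPolynomial (Fin 2) ℂ) : MvPolynomial (Fin 2) ℂ :=
  pderiv 0 P * pderiv 1 Q - pderiv 1 P * pderiv 0 Q

noncomputable def polyMap (F : PolyPair) (p : ℂ × ℂ) : ℂ × ℂ :=
  (eval2 F.1 p.1 p.2, eval2 F.2 p.1 p.2)

/-- `F` is a Keller mapping: its Jacobian determinant is a nonzero constant. -/
def IsKeller (F : PolyPair) : Prop :=
  ∃ c : ℂ, c ≠ 0 ∧ jacDet F.1 F.2 = MvPolynomial.C c

/-- `(u₀,v₀)` is a singular point of the plane curve `{H = 0}`. -/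
def IsSingularPoint (H : MvPolynomial (Fin 2) ℂ) (p : ℂ × ℂ) : Prop :=
  eval2 H p.1 p.2 = 0 ∧ eval2 (pderiv 0 H) p.1 p.2 = 0 ∧ eval2 (pderiv 1 H) p.1 p.2 = 0

/-- `G` is the `R`-dual of `F`, where `R(x,y) = (x^{-α}, x^β y + x^{-α} φ(x))`. -/
def IsRDual (F G : PolyPair) (α β : ℕ) (φ : Polynomial ℂ) : Prop :=
  ∀ x : ℂ, x ≠ 0 → ∀ y : ℂ,
    polyMap G (x, y) = polyMap F ((x ^ α)⁻¹, x ^ β * y + (x ^ α)⁻¹ * Polynomial.eval x φ)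

/-- `p` is an asymptotic value of `F` : a limit of `F` along a curve tending to infinity. -/
def IsAsympValue (F : PolyPair) (p : ℂ × ℂ) : Prop :=
  ∃ γ : ℝ → ℂ × ℂ, Continuous γ ∧ Tendsto (fun t => ‖γ t‖) atTop atTop ∧
    Tendsto (fun t => polyMap F (γ t)) atTop (nhds p)

/-- `F` is a polynomial automorphism of `ℂ²`. -/
def IsPolyAuto (F : PolyPair) : Prop :=
  ∃ Finv : PolyPair, (∀ p, polyMap F (polyMap Finv p) = p) ∧
    (∀ p, polyMap Finv (polyMap F p) = p)

section Aux

/-- Units of `ℂ[X,Y]` are constants. -/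
lemma aux_isUnit_eq_C {u : MvPolynomial (Fin 2) ℂ} (h : IsUnit u) :
    ∃ k : ℂ, u = MvPolynomial.C k := by
  let e := MvPolynomial.finSuccEquiv ℂ 1
  obtain ⟨r, hr, hCr⟩ := Polynomial.isUnit_iff.mp (h.map e)
  let e2 := MvPolynomial.finSuccEquiv ℂ 0
  obtain ⟨s, hs, hCs⟩ := Polynomial.isUnit_iff.mp (hr.map e2)
  obtain ⟨k, rfl⟩ := MvPolynomial.C_surjective (Fin 0) s
  refine ⟨k, ?_⟩
  have hr' : r = MvPolynomial.C k := by
    apply e2.injective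
    rw [← hCs]
    have h1 : (MvPolynomial.C k : MvPolynomial (Fin 1) ℂ) = algebraMap ℂ _ k := rfl
    have h2 : (Polynomial.C (MvPolynomial.C k : MvPolynomial (Fin 0) ℂ)
        : Polynomial (MvPolynomial (Fin 0) ℂ)) = algebraMap ℂ _ k := rfl
    rw [h1, h2, AlgEquiv.commutes]
  apply e.injective
  rw [← hCr, hr']
  have h1 : (MvPolynomial.C k : MvPolynomial (Fin 2) ℂ) = algebraMap ℂ _ k := rfl
  have h2 : (Polynomial.C (MvPolynomial.C k : MvPolynomial (Fin 1) ℂ)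
      : Polynomial (MvPolynomial (Fin 1) ℂ)) = algebraMap ℂ _ k := rfl
  rw [h1, h2, AlgEquiv.commutes]

lemma aux_vec_eta (x : Fin 2 → ℂ) : ![x 0, x 1] = x := by
  funext i; fin_cases i <;> simp

lemma aux_not_const (P Q : MvPolynomial (Fin 2) ℂ) {c : ℂ} (hc : c ≠ 0)
    (hjac : jacDet P Q = MvPolynomial.C c) (k : ℂ) : P ≠ MvPolynomial.C k := by
  intro hP
  have h0 : jacDet P Q = 0 := by
    simp [jacDet, hP]
  rw [hjac] at h0
  exact hc (by simpa using h0)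

/-- Key approximation lemma: for a Keller pair `(P,Q)` and any `(a,b)` and `ε>0`,
there is a point where `P = a` and `Q` is within `ε` of `b`. -/
lemma aux_key_approx (P Q : MvPolynomial (Fin 2) ℂ) {c : ℂ} (hc : c ≠ 0)
    (hjac : jacDet P Q = MvPolynomial.C c) (a b : ℂ) {ε : ℝ} (hε : 0 < ε) :
    ∃ z : ℂ × ℂ, eval2 P z.1 z.2 = a ∧ dist (eval2 Q z.1 z.2) b < ε := by
  by_contra hcon
  push_neg at hcon
  -- `hcon : ∀ z, eval2 P z.1 z.2 = a → ε ≤ dist (eval2 Q z.1 z.2) b`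
  set d : MvPolynomial (Fin 2) ℂ := P - MvPolynomial.C a with hd
  have hd0 : d ≠ 0 := by
    intro h0
    exact aux_not_const P Q hc hjac a (by rw [← sub_eq_zero]; exact h0)
  have hdu : ¬ IsUnit d := by
    intro hu
    obtain ⟨k, hk⟩ := aux_isUnit_eq_C hu
    refine aux_not_const P Q hc hjac (a + k) ?_
    rw [MvPolynomial.C_add, ← hk, hd]; ring
  set I : Ideal (MvPolynomial (Fin 2) ℂ) := Ideal.span {d} with hI
  let R := MvPolynomial (Fin 2) ℂ ⧸ I
  let mkA : MvPolynomial (Fin 2) ℂ →ₐ[ℂ] R := Ideal.Quotient.mkₐ ℂ I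
  -- for every `t` in the `ε`-ball around `b`, `Q - t` is invertible mod `d`
  have unit_t : ∀ t : ℂ, dist t b < ε → IsUnit (mkA (Q - MvPolynomial.C t)) := by
    intro t ht
    set J : Ideal (MvPolynomial (Fin 2) ℂ) := Ideal.span {d, Q - MvPolynomial.C t} with hJ
    have hempty : MvPolynomial.zeroLocus ℂ J = ∅ := by
      rw [Set.eq_empty_iff_forall_notMem]
      intro x hx
      have h1 : MvPolynomial.eval x d = 0 :=
        hx d (Ideal.subset_span (Set.mem_insert _ _))
      have h2 : MvPolynomial.eval x (Q - MvPolynomial.C t) = 0 :=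
        hx _ (Ideal.subset_span (Set.mem_insert_of_mem _ rfl))
      have hP1 : eval2 P (x 0) (x 1) = a := by
        rw [hd, map_sub, MvPolynomial.eval_C, sub_eq_zero] at h1
        rw [eval2, aux_vec_eta, h1]
      have hQ1 : eval2 Q (x 0) (x 1) = t := by
        rw [map_sub, MvPolynomial.eval_C, sub_eq_zero] at h2
        rw [eval2, aux_vec_eta, h2]
      have := hcon (x 0, x 1) hP1
      rw [hQ1] at this
      exact absurd ht (not_lt.mpr this)
    have hradical : J.radical = ⊤ := by
      rw [← MvPolynomial.vanishingIdeal_zeroLocus_eq_radical (K := ℂ), hempty,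
        MvPolynomial.vanishingIdeal_empty]
    have hJtop : J = ⊤ := Ideal.radical_eq_top.mp hradical
    have h1 : (1 : MvPolynomial (Fin 2) ℂ) ∈ J := hJtop ▸ Submodule.mem_top
    obtain ⟨u, v, huv⟩ := Ideal.mem_span_pair.mp h1
    have hmkd : mkA d = 0 := by
      rw [Ideal.Quotient.mkₐ_eq_mk, Ideal.Quotient.eq_zero_iff_mem]
      exact Ideal.subset_span rfl
    have hone : mkA v * mkA (Q - MvPolynomial.C t) = 1 := by
      have h2 := congrArg mkA huv
      rw [map_add, map_mul, map_mul, hmkd, mul_zero, zero_add, map_one] at h2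
      exact h2
    exact IsUnit.of_mul_eq_one _ (mul_comm (mkA v) _ ▸ hone)
  -- an index type of continuum cardinality
  let ι := ↥(Set.Ioo (-ε) ε)
  let tv : ι → ℂ := fun i => b + (i.1 : ℂ)
  have htv : ∀ i : ι, dist (tv i) b < ε := by
    intro i
    have h1 : tv i - b = (i.1 : ℂ) := by simp [tv]
    rw [Complex.dist_eq, h1, Complex.norm_real, Real.norm_eq_abs]
    exact abs_lt.mpr ⟨i.2.1, i.2.2⟩
  have htvinj : Function.Injective tv := by
    intro i j hij
    have h1 : (i.1 : ℂ) = (j.1 : ℂ) := by simpa [tv] using hij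
    exact Subtype.ext (by exact_mod_cast h1)
  have hu : ∀ i : ι, IsUnit (mkA (Q - MvPolynomial.C (tv i))) := fun i => unit_t (tv i) (htv i)
  let u : ι → R := fun i => ↑(hu i).unit⁻¹
  set q : R := mkA Q with hq
  have hmkt : ∀ i : ι, mkA (Q - MvPolynomial.C (tv i)) = q - algebraMap ℂ R (tv i) := by
    intro i
    rw [map_sub, hq]
    congr 1
  have huu : ∀ i : ι, (q - algebraMap ℂ R (tv i)) * u i = 1 := by
    intro i
    rw [← hmkt i]
    have h1 := (hu i).unit.mul_inv
    rwa [IsUnit.unit_spec] at h1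
  -- the family `u` cannot be linearly independent (cardinality)
  have hnli : ¬ LinearIndependent ℂ u := by
    intro hli
    have h1 : Cardinal.mk ι ≤ Module.rank ℂ R := hli.cardinal_le_rank
    have h2 : Module.rank ℂ R ≤ Module.rank ℂ (MvPolynomial (Fin 2) ℂ) :=
      LinearMap.rank_le_of_surjective mkA.toLinearMap (Ideal.Quotient.mkₐ_surjective ℂ I)
    have h3 : Module.rank ℂ (MvPolynomial (Fin 2) ℂ) ≤ Cardinal.aleph0 := by
      rw [← (MvPolynomial.basisMonomials (Fin 2) ℂ).mk_eq_rank'']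
      exact Cardinal.mk_le_aleph0
    have h4 : Cardinal.mk ι = Cardinal.continuum := Cardinal.mk_Ioo_real (by linarith)
    have h5 := (h1.trans h2).trans h3
    rw [h4] at h5
    exact absurd h5 (not_le.mpr Cardinal.aleph0_lt_continuum)
  rw [linearIndependent_iff'] at hnli
  push_neg at hnli
  obtain ⟨s, g, hsum, i₀, hi₀s, hgi₀⟩ := hnli
  -- build the one-variable polynomial witnessing the dependence
  set p : Polynomial ℂ :=
    ∑ i ∈ s, Polynomial.C (g i) * ∏ j ∈ s.erase i, (Polynomial.X - Polynomial.C (tv j)) with hp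
  have hp0 : p ≠ 0 := by
    intro h0
    have heval : Polynomial.eval (tv i₀) p = 0 := by rw [h0]; simp
    rw [hp] at heval
    simp only [Polynomial.eval_finset_sum, Polynomial.eval_mul, Polynomial.eval_C,
      Polynomial.eval_prod, Polynomial.eval_sub, Polynomial.eval_X] at heval
    rw [Finset.sum_eq_single i₀] at heval
    · have hfac : ∀ j ∈ s.erase i₀, tv i₀ - tv j ≠ 0 := by
        intro j hj hz
        exact (Finset.mem_erase.mp hj).1 (htvinj (sub_eq_zero.mp hz)).symm
      rcases mul_eq_zero.mp heval with h' | h'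
      · exact hgi₀ h'
      · exact Finset.prod_ne_zero_iff.mpr hfac h'
    · intro i his hine
      have hi₀e : i₀ ∈ s.erase i := Finset.mem_erase.mpr ⟨fun h' => hine h'.symm, hi₀s⟩
      rw [Finset.prod_eq_zero hi₀e (by ring), mul_zero]
    · intro habs; exact absurd hi₀s habs
  -- `aeval` of `p` at `q` vanishes
  have haeval : Polynomial.aeval q p = 0 := by
    rw [hp, map_sum]
    have hterm : ∀ i ∈ s,
        (Polynomial.aeval q) (Polynomial.C (g i) *
          ∏ j ∈ s.erase i, (Polynomial.X - Polynomial.C (tv j)))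
        = (g i • u i) * ∏ j ∈ s, (q - algebraMap ℂ R (tv j)) := by
      intro i his
      rw [map_mul, Polynomial.aeval_C, map_prod]
      simp only [map_sub, Polynomial.aeval_X, Polynomial.aeval_C]
      have hprod : ∏ j ∈ s, (q - algebraMap ℂ R (tv j))
          = (q - algebraMap ℂ R (tv i)) * ∏ j ∈ s.erase i, (q - algebraMap ℂ R (tv j)) :=
        (Finset.mul_prod_erase s _ his).symm
      rw [hprod, smul_mul_assoc, ← mul_assoc (u i), mul_comm (u i), huu i, one_mul]
      exact (Algebra.smul_def _ _).symm
    rw [Finset.sum_congr rfl hterm, ← Finset.sum_mul, hsum, zero_mul]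
  have hmem : Polynomial.aeval Q p ∈ I := by
    have h1 : mkA (Polynomial.aeval Q p) = 0 := by
      rw [← Polynomial.aeval_algHom_apply mkA Q p]
      exact haeval
    rwa [Ideal.Quotient.mkₐ_eq_mk, Ideal.Quotient.eq_zero_iff_mem] at h1
  have hdvd : d ∣ Polynomial.aeval Q p := Ideal.mem_span_singleton.mp hmem
  -- factor `p` over `ℂ`
  have hsplit : p = Polynomial.C p.leadingCoeff *
      (p.roots.map fun r => Polynomial.X - Polynomial.C r).prod :=
    (IsAlgClosed.splits p).eq_prod_roots
  have haQ : Polynomial.aeval Q p = MvPolynomial.C p.leadingCoeff *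
      (p.roots.map fun r => Q - MvPolynomial.C r).prod := by
    conv_lhs => rw [hsplit]
    rw [map_mul, Polynomial.aeval_C, map_multiset_prod, Multiset.map_map]
    congr 1
    refine congrArg _ (Multiset.map_congr rfl fun r _ => ?_)
    simp only [Function.comp_apply, map_sub, Polynomial.aeval_X, Polynomial.aeval_C]
    rfl
  obtain ⟨f, hfi, hfdvd⟩ := WfDvdMonoid.exists_irreducible_factor hdu hd0
  have hfp : Prime f := UniqueFactorizationMonoid.irreducible_iff_prime.mp hfi
  have hfQ : f ∣ (p.roots.map fun r => Q - MvPolynomial.C r).prod := by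
    have h1 : f ∣ MvPolynomial.C p.leadingCoeff *
        (p.roots.map fun r => Q - MvPolynomial.C r).prod := by
      rw [← haQ]; exact hfdvd.trans hdvd
    rcases hfp.2.2 _ _ h1 with h' | h'
    · exfalso
      have hlc : p.leadingCoeff ≠ 0 := Polynomial.leadingCoeff_ne_zero.mpr hp0
      have hCu : IsUnit (MvPolynomial.C p.leadingCoeff : MvPolynomial (Fin 2) ℂ) :=
        IsUnit.of_mul_eq_one (MvPolynomial.C p.leadingCoeff⁻¹)
          (by rw [← MvPolynomial.C_mul, mul_inv_cancel₀ hlc, MvPolynomial.C_1])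
      exact hfp.not_unit (isUnit_of_dvd_unit h' hCu)
    · exact h'
  obtain ⟨y, hy, hfy⟩ := hfp.exists_mem_multiset_dvd hfQ
  obtain ⟨r, hr, rfl⟩ := Multiset.mem_map.mp hy
  -- `f` has a zero
  have hzero : ∃ x : Fin 2 → ℂ, MvPolynomial.eval x f = 0 := by
    by_contra hno
    push_neg at hno
    have hempty : MvPolynomial.zeroLocus ℂ (Ideal.span {f}) = ∅ := by
      rw [Set.eq_empty_iff_forall_notMem]
      intro x hx
      exact hno x (hx f (Ideal.subset_span rfl))
    have htop : Ideal.span {f} = ⊤ := Ideal.radical_eq_top.mp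
      (by rw [← MvPolynomial.vanishingIdeal_zeroLocus_eq_radical (K := ℂ), hempty,
        MvPolynomial.vanishingIdeal_empty])
    exact hfi.not_isUnit (Ideal.span_singleton_eq_top.mp htop)
  obtain ⟨x₀, hx₀⟩ := hzero
  obtain ⟨g1, hg1⟩ := hfdvd
  obtain ⟨h1p, hh1⟩ := hfy
  have hPeq : P = f * g1 + MvPolynomial.C a := by rw [← hg1, hd]; ring
  have hQeq : Q = f * h1p + MvPolynomial.C r := by rw [← hh1]; ring
  have hEP : ∀ i : Fin 2, MvPolynomial.eval x₀ (pderiv i P)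
      = MvPolynomial.eval x₀ (pderiv i f) * MvPolynomial.eval x₀ g1 := by
    intro i
    rw [hPeq]
    simp [pderiv_mul, hx₀, mul_comm]
  have hEQ : ∀ i : Fin 2, MvPolynomial.eval x₀ (pderiv i Q)
      = MvPolynomial.eval x₀ (pderiv i f) * MvPolynomial.eval x₀ h1p := by
    intro i
    rw [hQeq]
    simp [pderiv_mul, hx₀, mul_comm]
  have hjeval : MvPolynomial.eval x₀ (jacDet P Q) = 0 := by
    rw [jacDet]
    simp only [map_sub, map_mul]
    rw [hEP 0, hEP 1, hEQ 0, hEQ 1]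
    ring
  rw [hjac] at hjeval
  simp only [MvPolynomial.eval_C] at hjeval
  exact hc hjeval

lemma aux_continuous_polyMap (F : PolyPair) : Continuous (polyMap F) := by
  have hv : Continuous fun p : ℂ × ℂ => (![p.1, p.2] : Fin 2 → ℂ) := by
    refine continuous_pi fun i => ?_
    fin_cases i
    · simpa using continuous_fst
    · simpa using continuous_snd
  exact ((MvPolynomial.continuous_eval F.1).comp hv).prodMk
    ((MvPolynomial.continuous_eval F.2).comp hv)

end Aux

/-- every Picard exceptional value of a Keller mapping is a limiting
value of the mapping along points tending to infinity. -/
theorem picard_exceptional_is_limiting_value (F : PolyPair) (hK : IsKeller F)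
    (a b : ℂ) (h : (a, b) ∉ Set.range (polyMap F)) :
    ∃ z : ℕ → ℂ × ℂ, Tendsto (fun n => ‖z n‖) atTop atTop ∧
      Tendsto (fun n => polyMap F (z n)) atTop (nhds (a, b)) := by
  obtain ⟨c, hc, hjac⟩ := hK
  have key : ∀ n : ℕ, ∃ z : ℂ × ℂ,
      eval2 F.1 z.1 z.2 = a ∧ dist (eval2 F.2 z.1 z.2) b < 1 / (n + 1) :=
    fun n => aux_key_approx F.1 F.2 hc hjac a b (by positivity)
  choose z hz1 hz2 using key
  have hdisteq : ∀ n, dist (polyMap F (z n)) (a, b) = dist (eval2 F.2 (z n).1 (z n).2) b := by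
    intro n
    rw [Prod.dist_eq]
    simp only [polyMap, hz1 n, dist_self]
    exact max_eq_right dist_nonneg
  have hFz : Tendsto (fun n => polyMap F (z n)) atTop (nhds (a, b)) := by
    refine tendsto_iff_dist_tendsto_zero.mpr ?_
    refine squeeze_zero (fun n => dist_nonneg) (fun n => ?_)
      tendsto_one_div_add_atTop_nhds_zero_nat
    rw [hdisteq n]
    exact le_of_lt (hz2 n)
  refine ⟨z, ?_, hFz⟩
  by_contra hcon
  rw [tendsto_atTop] at hcon
  push_neg at hcon
  obtain ⟨M, hM⟩ := hcon
  have hM' : ∃ᶠ n in atTop, ‖z n‖ < M := hM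
  obtain ⟨φ, hφmono, hφ⟩ := Filter.extraction_of_frequently_atTop hM'
  have hmem : ∀ n, z (φ n) ∈ Metric.closedBall (0 : ℂ × ℂ) M := by
    intro n
    rw [Metric.mem_closedBall, dist_zero_right]
    exact le_of_lt (hφ n)
  obtain ⟨p₀, hp₀, ψ, hψmono, hlim⟩ :=
    (isCompact_closedBall (0 : ℂ × ℂ) M).tendsto_subseq hmem
  have l1 : Tendsto (fun n => polyMap F (z (φ (ψ n)))) atTop (nhds (polyMap F p₀)) :=
    ((aux_continuous_polyMap F).tendsto p₀).comp hlim
  have l2 : Tendsto (fun n => polyMap F (z (φ (ψ n)))) atTop (nhds (a, b)) :=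
    hFz.comp ((hφmono.comp hψmono).tendsto_atTop)
  exact h ⟨p₀, tendsto_nhds_unique l1 l2⟩
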